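/- arXiv:2212.01419 — 3 statements merged into one kernel-verified Lean document; each statement's English description precedes it below -/
import Mathlib

section
/- Let δ : Ω × [0,1] → {0,1} be a jointly measurable indicator process, and let λ : [0,1] → ℝ be continuously differentiable with 0 < λ₀ ≤ λ(t) ≤ Λ and |λ′(t)| ≤ L for all t. Suppose for some p > 2 that E[ (∫₀¹ δ(·,v) dv)^{-p} ] < ∞ and that there is a constant C > 0 with P(δ(·,s) ≠ δ(·,t)) ≤ C|s − t|^p for all s, t ∈ [0,1]. Define λ*(t) = E[ δ(·,t) λ(t) / ∫₀¹ δ(·,v) λ(v) dv ]. Then for every t ∈ (0,1), λ* is differentiable at t with derivative (λ*)′(t) = E[ δ(·,t) λ′(t) / ∫₀¹ δ(·,v) λ(v) dv ], and this derivative is bounded in absolute value by (L/λ₀) · E[ (∫₀¹ δ(·,v) dv)^{-1} ]. -/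
open MeasureTheory

private lemma aux_inv_le_rpow {x q : ℝ} (hx0 : 0 ≤ x) (hx1 : x ≤ 1) (hq : 1 ≤ q) :
    x⁻¹ ≤ x ^ (-q) := by
  rcases eq_or_lt_of_le hx0 with h0 | h0
  · rw [← h0, inv_zero, Real.zero_rpow (neg_ne_zero.2 (by linarith))]
  · calc x⁻¹ = x ^ (-1 : ℝ) := (Real.rpow_neg_one x).symm
      _ ≤ x ^ (-q) := Real.rpow_le_rpow_of_exponent_ge h0 hx1 (by linarith)

private lemma aux_inv_le {x ε q : ℝ} (hx0 : 0 ≤ x) (hx1 : x ≤ 1) (hε : 0 < ε) (hq : 1 ≤ q) :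
    x⁻¹ ≤ ε⁻¹ + ε ^ (q - 1) * x ^ (-q) := by
  rcases eq_or_lt_of_le hx0 with h0 | h0
  · rw [← h0, inv_zero]
    have hz : (0:ℝ) ^ (-q) = 0 := Real.zero_rpow (neg_ne_zero.2 (by linarith))
    rw [hz, mul_zero, add_zero]
    exact inv_nonneg.2 hε.le
  · rcases le_or_gt ε x with h | h
    · have h1 : x⁻¹ ≤ ε⁻¹ := by gcongr
      have h2 : 0 ≤ ε ^ (q-1) * x ^ (-q) :=
        mul_nonneg (Real.rpow_nonneg hε.le _) (Real.rpow_nonneg hx0 _)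
      linarith
    · have hid : x⁻¹ = x ^ (q - 1) * x ^ (-q) := by
        rw [← Real.rpow_add h0, ← Real.rpow_neg_one x]
        congr 1; ring
      have h1 : x ^ (q-1) ≤ ε ^ (q-1) := Real.rpow_le_rpow hx0 h.le (by linarith)
      have h2 : 0 ≤ x ^ (-q) := Real.rpow_nonneg hx0 _
      have h3 := mul_le_mul_of_nonneg_right h1 h2
      have h4 : 0 ≤ ε⁻¹ := inv_nonneg.2 hε.le
      linarith

/-- Differentiability of `λ*(t) = E[δ(·,t)λ(t) / ∫₀¹ δ(·,v)λ(v) dv]` on `(0,1)` under the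
reciprocal moment condition and the Hölder-type condition on the indicator process, with
derivative `E[δ(·,t)λ'(t) / ∫₀¹ δ(·,v)λ(v) dv]` bounded by `(L/λ₀) E[(∫₀¹ δ(·,v) dv)⁻¹]`. -/
theorem stmt_7 {Ω : Type*} [MeasurableSpace Ω] (μ : Measure Ω) [IsProbabilityMeasure μ]
    (δ : Ω → ℝ → ℝ) (hδ : Measurable (fun q : Ω × ℝ => δ q.1 q.2))
    (h01 : ∀ ω, ∀ t ∈ Set.Icc (0:ℝ) 1, δ ω t = 0 ∨ δ ω t = 1)
    (lam lam' : ℝ → ℝ)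
    (hderiv : ∀ t ∈ Set.Icc (0:ℝ) 1, HasDerivAt lam (lam' t) t)
    (hderivCont : ContinuousOn lam' (Set.Icc (0:ℝ) 1))
    (lam₀ Λ L : ℝ) (hlam₀ : 0 < lam₀)
    (hlam : ∀ t ∈ Set.Icc (0:ℝ) 1, lam₀ ≤ lam t ∧ lam t ≤ Λ)
    (hL : ∀ t ∈ Set.Icc (0:ℝ) 1, |lam' t| ≤ L)
    (p : ℝ) (hp : 2 < p)
    (hrecipP : Integrable (fun ω => (∫ v in Set.Icc (0:ℝ) 1, δ ω v) ^ (-p)) μ)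
    (C : ℝ) (hC : 0 < C)
    (hHolder : ∀ s ∈ Set.Icc (0:ℝ) 1, ∀ t ∈ Set.Icc (0:ℝ) 1,
      (μ {ω | δ ω s ≠ δ ω t}).toReal ≤ C * |s - t| ^ p)
    (lamStar : ℝ → ℝ)
    (hlamStar : ∀ t, lamStar t =
      ∫ ω, δ ω t * lam t / (∫ v in Set.Icc (0:ℝ) 1, δ ω v * lam v) ∂μ) :
    ∀ t ∈ Set.Ioo (0:ℝ) 1,
      HasDerivAt lamStar
        (∫ ω, δ ω t * lam' t / (∫ v in Set.Icc (0:ℝ) 1, δ ω v * lam v) ∂μ) t ∧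
      |∫ ω, δ ω t * lam' t / (∫ v in Set.Icc (0:ℝ) 1, δ ω v * lam v) ∂μ|
        ≤ (L / lam₀) * ∫ ω, (∫ v in Set.Icc (0:ℝ) 1, δ ω v)⁻¹ ∂μ := by
  intro t ht
  have htI : t ∈ Set.Icc (0:ℝ) 1 := Set.mem_Icc_of_Ioo ht
  -- a continuous extension of `lam` to all of `ℝ`
  set proj : ℝ → ℝ := fun v => min (max v 0) 1 with hproj
  have hprojmem : ∀ v, proj v ∈ Set.Icc (0:ℝ) 1 := fun v =>
    ⟨le_min (le_max_right v 0) zero_le_one, min_le_right _ _⟩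
  set clam : ℝ → ℝ := fun v => lam (proj v) with hclam
  have hclam_cont : Continuous clam := by
    rw [continuous_iff_continuousAt]
    intro v
    exact ((hderiv _ (hprojmem v)).continuousAt).comp
      (((continuous_id.max continuous_const).min continuous_const).continuousAt)
  have hclam_eq : ∀ v ∈ Set.Icc (0:ℝ) 1, clam v = lam v := by
    intro v hv
    simp only [hclam, hproj]
    rw [max_eq_left hv.1, min_eq_left hv.2]
  have hclam_bdd : ∀ v ∈ Set.Icc (0:ℝ) 1, lam₀ ≤ clam v ∧ clam v ≤ Λ := fun v hv => by
    rw [hclam_eq v hv]; exact hlam v hv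
  set I : Ω → ℝ := fun ω => ∫ v in Set.Icc (0:ℝ) 1, δ ω v with hI
  set D : Ω → ℝ := fun ω => ∫ v in Set.Icc (0:ℝ) 1, δ ω v * clam v with hD
  have hDeq : ∀ ω, (∫ v in Set.Icc (0:ℝ) 1, δ ω v * lam v) = D ω := fun ω =>
    setIntegral_congr_fun measurableSet_Icc (fun v hv => by rw [hclam_eq v hv])
  -- measurability
  have hmδ : ∀ s : ℝ, Measurable fun ω => δ ω s := fun s => hδ.comp measurable_prodMk_right
  have hmδω : ∀ ω, Measurable fun v => δ ω v := fun ω => hδ.comp measurable_prodMk_left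
  have hImeas : Measurable I := by
    have h : StronglyMeasurable fun q : Ω × ℝ => δ q.1 q.2 := hδ.stronglyMeasurable
    exact h.integral_prod_right'.measurable
  have hDmeas : Measurable D := by
    have h : StronglyMeasurable fun q : Ω × ℝ => δ q.1 q.2 * clam q.2 :=
      (hδ.mul (hclam_cont.measurable.comp measurable_snd)).stronglyMeasurable
    exact h.integral_prod_right'.measurable
  -- integrability in `v`
  have hIntδ : ∀ ω, IntegrableOn (fun v => δ ω v) (Set.Icc (0:ℝ) 1) := by
    intro ω
    refine Measure.integrableOn_of_bounded measure_Icc_lt_top.ne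
      ((hmδω ω).aestronglyMeasurable) (M := 1) ?_
    refine (ae_restrict_iff' measurableSet_Icc).2 (ae_of_all _ fun v hv => ?_)
    rcases h01 ω v hv with h | h <;> simp [h]
  have hIntδl : ∀ ω, IntegrableOn (fun v => δ ω v * clam v) (Set.Icc (0:ℝ) 1) := by
    intro ω
    refine Measure.integrableOn_of_bounded measure_Icc_lt_top.ne
      (((hmδω ω).mul hclam_cont.measurable).aestronglyMeasurable) (M := Λ) ?_
    refine (ae_restrict_iff' measurableSet_Icc).2 (ae_of_all _ fun v hv => ?_)
    have h1 := hclam_bdd v hv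
    rcases h01 ω v hv with h | h
    · rw [Real.norm_eq_abs, h, zero_mul, abs_zero]; linarith [h1.1, h1.2]
    · rw [Real.norm_eq_abs, h, one_mul, abs_of_pos (lt_of_lt_of_le hlam₀ h1.1)]
      exact h1.2
  have hI0 : ∀ ω, 0 ≤ I ω := fun ω =>
    setIntegral_nonneg measurableSet_Icc fun v hv => by
      rcases h01 ω v hv with h | h <;> simp [h]
  have hI1 : ∀ ω, I ω ≤ 1 := by
    intro ω
    have h : I ω ≤ ∫ v in Set.Icc (0:ℝ) 1, (1:ℝ) :=
      setIntegral_mono_on (hIntδ ω) (integrableOn_const measure_Icc_lt_top.ne)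
        measurableSet_Icc (fun v hv => by rcases h01 ω v hv with h | h <;> simp [h])
    simpa [Real.volume_Icc] using h
  have hDge : ∀ ω, lam₀ * I ω ≤ D ω := by
    intro ω
    have h : ∫ v in Set.Icc (0:ℝ) 1, lam₀ * δ ω v ≤ D ω :=
      setIntegral_mono_on ((hIntδ ω).const_mul lam₀) (hIntδl ω) measurableSet_Icc
        (fun v hv => by
          rcases h01 ω v hv with h | h
          · rw [h]; simp
          · rw [h]; simpa using (hclam_bdd v hv).1)
    rwa [integral_const_mul] at h
  have hD0 : ∀ ω, 0 ≤ D ω := fun ω => le_trans (mul_nonneg hlam₀.le (hI0 ω)) (hDge ω)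
  -- the key division bound
  have hdivle : ∀ ω, ∀ a : ℝ, a ≤ 1 → a / D ω ≤ lam₀⁻¹ * (I ω)⁻¹ := by
    intro ω a ha
    rcases eq_or_lt_of_le (hI0 ω) with h0 | h0
    · have hzero : (fun v => δ ω v) =ᶠ[ae (volume.restrict (Set.Icc (0:ℝ) 1))] 0 := by
        refine (integral_eq_zero_iff_of_nonneg_ae ?_ (hIntδ ω)).1 h0.symm
        refine (ae_restrict_iff' measurableSet_Icc).2 (ae_of_all _ fun v hv => ?_)
        rcases h01 ω v hv with h | h <;> simp [h]
      have hDzero : D ω = 0 := by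
        have h : (∫ v in Set.Icc (0:ℝ) 1, δ ω v * clam v)
            = ∫ v in Set.Icc (0:ℝ) 1, (0:ℝ) := by
          refine integral_congr_ae (hzero.mono fun v hv => ?_)
          simp only [Pi.zero_apply] at hv ⊢
          rw [hv, zero_mul]
        simpa using h
      rw [hDzero, div_zero, ← h0, inv_zero, mul_zero]
    · calc a / D ω ≤ 1 / (lam₀ * I ω) :=
            div_le_div₀ zero_le_one ha (mul_pos hlam₀ h0) (hDge ω)
        _ = lam₀⁻¹ * (I ω)⁻¹ := by rw [one_div, mul_inv]
  -- integrability over Ω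
  have hrecip1 : Integrable (fun ω => (I ω)⁻¹) μ := by
    refine hrecipP.mono hImeas.inv.aestronglyMeasurable (ae_of_all _ fun ω => ?_)
    rw [Real.norm_eq_abs, Real.norm_eq_abs, abs_of_nonneg (inv_nonneg.2 (hI0 ω)),
      abs_of_nonneg (Real.rpow_nonneg (hI0 ω) _)]
    exact aux_inv_le_rpow (hI0 ω) (hI1 ω) (by linarith)
  have hGmeas : ∀ s : ℝ, AEStronglyMeasurable (fun ω => δ ω s / D ω) μ :=
    fun s => ((hmδ s).div hDmeas).aestronglyMeasurable
  have hδle1 : ∀ ω, ∀ s ∈ Set.Icc (0:ℝ) 1, δ ω s ≤ 1 := by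
    intro ω s hs; rcases h01 ω s hs with h | h <;> simp [h]
  have hδ0 : ∀ ω, ∀ s ∈ Set.Icc (0:ℝ) 1, 0 ≤ δ ω s := by
    intro ω s hs; rcases h01 ω s hs with h | h <;> simp [h]
  have hGint : ∀ s ∈ Set.Icc (0:ℝ) 1, Integrable (fun ω => δ ω s / D ω) μ := by
    intro s hs
    refine (hrecip1.const_mul lam₀⁻¹).mono (hGmeas s) (ae_of_all _ fun ω => ?_)
    have h1 : δ ω s / D ω ≤ lam₀⁻¹ * (I ω)⁻¹ := hdivle ω _ (hδle1 ω s hs)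
    have h2 : 0 ≤ δ ω s / D ω := div_nonneg (hδ0 ω s hs) (hD0 ω)
    rw [Real.norm_eq_abs, Real.norm_eq_abs, abs_of_nonneg h2,
      abs_of_nonneg (mul_nonneg (inv_nonneg.2 hlam₀.le) (inv_nonneg.2 (hI0 ω)))]
    exact h1
  set F : ℝ → ℝ := fun u => ∫ ω, δ ω u / D ω ∂μ with hF
  set M : ℝ := ∫ ω, I ω ^ (-p) ∂μ with hM
  have hM0 : 0 ≤ M := integral_nonneg fun ω => Real.rpow_nonneg (hI0 ω) _
  set K : ℝ := lam₀⁻¹ * (C + M) with hK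
  have hK0 : 0 < K := mul_pos (inv_pos.2 hlam₀) (by linarith)
  -- the Hölder estimate on F
  have hFest : ∀ s ∈ Set.Icc (0:ℝ) 1, ∀ u ∈ Set.Icc (0:ℝ) 1,
      |F s - F u| ≤ K * |s - u| ^ (p - 1) := by
    intro s hs u hu
    rcases eq_or_ne s u with rfl | hsu
    · simp [Real.zero_rpow (by intro h; linarith [h] : p - 1 ≠ 0)]
    · set ε : ℝ := |s - u| with hε
      have hεpos : 0 < ε := abs_pos.2 (sub_ne_zero.2 hsu)
      set A : Set Ω := {ω | δ ω s ≠ δ ω u} with hA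
      have hAmeas : MeasurableSet A := (measurableSet_eq_fun (hmδ s) (hmδ u)).compl
      set H : Ω → ℝ :=
        fun ω => lam₀⁻¹ * (A.indicator (fun _ => ε⁻¹) ω + ε ^ (p - 1) * I ω ^ (-p)) with hH
      have hHint : Integrable H μ :=
        ((((integrable_const ε⁻¹).indicator hAmeas)).add (hrecipP.const_mul _)).const_mul _
      have hptwise : ∀ ω, ‖δ ω s / D ω - δ ω u / D ω‖ ≤ H ω := by
        intro ω
        rw [Real.norm_eq_abs]
        by_cases hne : δ ω s = δ ω u
        · rw [hne, sub_self, abs_zero]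
          refine mul_nonneg (inv_nonneg.2 hlam₀.le) (add_nonneg
            (Set.indicator_nonneg (fun _ _ => inv_nonneg.2 hεpos.le) ω)
            (mul_nonneg (Real.rpow_nonneg hεpos.le _) (Real.rpow_nonneg (hI0 ω) _)))
        · have hmem : ω ∈ A := hne
          have h1 : |δ ω s / D ω - δ ω u / D ω| = |δ ω s - δ ω u| / D ω := by
            rw [div_sub_div_same, abs_div, abs_of_nonneg (hD0 ω)]
          have h2 : |δ ω s - δ ω u| ≤ 1 := by
            rcases h01 ω s hs with ha | ha <;> rcases h01 ω u hu with hb | hb <;>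
              rw [ha, hb] <;> norm_num
          have h3 : |δ ω s - δ ω u| / D ω ≤ lam₀⁻¹ * (I ω)⁻¹ := hdivle ω _ h2
          have h4 : (I ω)⁻¹ ≤ ε⁻¹ + ε ^ (p - 1) * I ω ^ (-p) :=
            aux_inv_le (hI0 ω) (hI1 ω) hεpos (by linarith)
          rw [h1]
          simp only [hH, Set.indicator_of_mem hmem]
          calc |δ ω s - δ ω u| / D ω ≤ lam₀⁻¹ * (I ω)⁻¹ := h3
            _ ≤ lam₀⁻¹ * (ε⁻¹ + ε ^ (p - 1) * I ω ^ (-p)) :=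
              mul_le_mul_of_nonneg_left h4 (inv_nonneg.2 hlam₀.le)
      have hFs : F s - F u = ∫ ω, (δ ω s / D ω - δ ω u / D ω) ∂μ :=
        (integral_sub (hGint s hs) (hGint u hu)).symm
      have hnorm : |F s - F u| ≤ ∫ ω, H ω ∂μ := by
        rw [hFs, ← Real.norm_eq_abs]
        exact norm_integral_le_of_norm_le hHint (ae_of_all _ hptwise)
      have hHval : ∫ ω, H ω ∂μ = lam₀⁻¹ * ((μ A).toReal * ε⁻¹ + ε ^ (p - 1) * M) := by
        simp only [hH]
        rw [integral_const_mul]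
        congr 1
        rw [integral_add ((integrable_const ε⁻¹).indicator hAmeas) (hrecipP.const_mul _),
          integral_indicator_const ε⁻¹ hAmeas, integral_const_mul, smul_eq_mul, ← hM, Measure.real]
      have hμA : (μ A).toReal ≤ C * ε ^ p := hHolder s hs u hu
      have hpow : ε ^ p * ε⁻¹ = ε ^ (p - 1) := by
        rw [← Real.rpow_neg_one ε, ← Real.rpow_add hεpos]
        congr 1 <;> ring
      calc |F s - F u| ≤ lam₀⁻¹ * ((μ A).toReal * ε⁻¹ + ε ^ (p - 1) * M) := by
            rw [← hHval]; exact hnorm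
        _ ≤ lam₀⁻¹ * ((C * ε ^ p) * ε⁻¹ + ε ^ (p - 1) * M) := by
            refine mul_le_mul_of_nonneg_left ?_ (inv_nonneg.2 hlam₀.le)
            exact add_le_add_left
              (mul_le_mul_of_nonneg_right hμA (inv_nonneg.2 hεpos.le)) _
        _ = K * ε ^ (p - 1) := by
            rw [hK, mul_assoc C, hpow]; ring
  -- F has derivative 0 at t
  have hF0 : HasDerivAt F 0 t := by
    rw [hasDerivAt_iff_isLittleO]
    simp only [smul_zero, sub_zero]
    rw [Asymptotics.isLittleO_iff]
    intro c hc
    have hη : 0 < min (min t (1 - t)) ((c / K) ^ (p - 2)⁻¹) := by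
      refine lt_min (lt_min ht.1 (by linarith [ht.2])) ?_
      exact Real.rpow_pos_of_pos (div_pos hc hK0) _
    filter_upwards [Metric.ball_mem_nhds t hη] with s hsball
    have hdist : |s - t| < min (min t (1 - t)) ((c / K) ^ (p - 2)⁻¹) := by
      rwa [Metric.mem_ball, Real.dist_eq] at hsball
    have h1 : |s - t| < t :=
      lt_of_lt_of_le hdist (le_trans (min_le_left _ _) (min_le_left _ _))
    have h2 : |s - t| < 1 - t :=
      lt_of_lt_of_le hdist (le_trans (min_le_left _ _) (min_le_right _ _))
    have h1' := abs_lt.1 h1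
    have h2' := abs_lt.1 h2
    have hsI : s ∈ Set.Icc (0:ℝ) 1 := ⟨by linarith [h1'.1], by linarith [h2'.2]⟩
    rcases eq_or_ne s t with rfl | hst
    · simp
    · have hεp : 0 < |s - t| := abs_pos.2 (sub_ne_zero.2 hst)
      have hle : |F s - F t| ≤ K * |s - t| ^ (p - 1) := hFest s hsI t htI
      have hsplit : |s - t| ^ (p - 1) = |s - t| ^ (p - 2) * |s - t| := by
        have h := Real.rpow_add hεp (p - 2) 1
        rw [Real.rpow_one] at h
        rw [show p - 1 = p - 2 + 1 by ring, h]
      have h3 : |s - t| ≤ (c / K) ^ (p - 2)⁻¹ :=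
        le_of_lt (lt_of_lt_of_le hdist (min_le_right _ _))
      have h4 : |s - t| ^ (p - 2) ≤ ((c / K) ^ (p - 2)⁻¹) ^ (p - 2) :=
        Real.rpow_le_rpow (abs_nonneg _) h3 (by linarith)
      rw [Real.rpow_inv_rpow (div_pos hc hK0).le (by intro h; linarith [h] : p - 2 ≠ 0)] at h4
      rw [Real.norm_eq_abs, Real.norm_eq_abs]
      calc |F s - F t| ≤ K * |s - t| ^ (p - 1) := hle
        _ = K * |s - t| ^ (p - 2) * |s - t| := by rw [hsplit]; ring
        _ ≤ K * (c / K) * |s - t| := by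
            exact mul_le_mul_of_nonneg_right
              (mul_le_mul_of_nonneg_left h4 hK0.le) (abs_nonneg _)
        _ = c * |s - t| := by field_simp
  -- factorization of the integrals
  have hfact : ∀ u : ℝ, ∀ g : ℝ → ℝ, (∫ ω, δ ω u * g u / D ω ∂μ) = g u * F u := by
    intro u g
    calc (∫ ω, δ ω u * g u / D ω ∂μ) = ∫ ω, g u * (δ ω u / D ω) ∂μ := by
          congr 1; funext ω; ring
      _ = g u * F u := integral_const_mul _ _
  have hlamStar' : ∀ u, lamStar u = lam u * F u := by
    intro u
    rw [hlamStar u]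
    have h : (∫ ω, δ ω u * lam u / (∫ v in Set.Icc (0:ℝ) 1, δ ω v * lam v) ∂μ)
        = ∫ ω, δ ω u * lam u / D ω ∂μ := by
      congr 1; funext ω; rw [hDeq ω]
    rw [h]; exact hfact u lam
  have htarget : (∫ ω, δ ω t * lam' t / (∫ v in Set.Icc (0:ℝ) 1, δ ω v * lam v) ∂μ)
      = lam' t * F t := by
    have h : (∫ ω, δ ω t * lam' t / (∫ v in Set.Icc (0:ℝ) 1, δ ω v * lam v) ∂μ)
        = ∫ ω, δ ω t * lam' t / D ω ∂μ := by
      congr 1; funext ω; rw [hDeq ω]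
    rw [h]; exact hfact t lam'
  have hmul : HasDerivAt (fun u => lam u * F u) (lam' t * F t + lam t * 0) t :=
    (hderiv t htI).mul hF0
  rw [mul_zero, add_zero] at hmul
  have hds : HasDerivAt lamStar (lam' t * F t) t :=
    hmul.congr_of_eventuallyEq (Filter.Eventually.of_forall hlamStar')
  have hFt0 : 0 ≤ F t :=
    integral_nonneg fun ω => div_nonneg (hδ0 ω t htI) (hD0 ω)
  have hFle : F t ≤ lam₀⁻¹ * ∫ ω, (I ω)⁻¹ ∂μ := by
    have h := integral_mono (hGint t htI) (hrecip1.const_mul lam₀⁻¹)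
      (fun ω => hdivle ω _ (hδle1 ω t htI))
    rwa [integral_const_mul] at h
  have hL0 : 0 ≤ L := le_trans (abs_nonneg _) (hL t htI)
  refine ⟨?_, ?_⟩
  · rw [htarget]; exact hds
  · rw [htarget]
    calc |lam' t * F t| = |lam' t| * F t := by rw [abs_mul, abs_of_nonneg hFt0]
      _ ≤ L * (lam₀⁻¹ * ∫ ω, (I ω)⁻¹ ∂μ) :=
          mul_le_mul (hL t htI) hFle hFt0 hL0
      _ = (L / lam₀) * ∫ ω, (I ω)⁻¹ ∂μ := by rw [div_eq_mul_inv]; ring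
end

section
/- Let K : ℝ → [0,∞) be a measurable kernel supported in [−1,1] with ∫_{−1}^1 K(w) dw = 1, and let λ : [0,1] → ℝ be differentiable with |λ′(t)| ≤ L for all t. For 0 < h ≤ 1 and t ∈ [0,1], define κ₀(t;h) = ∫_{max(−1, −t/h)}^{min(1, (1−t)/h)} K(w) dw. Then for every t ∈ [0,1], | ∫₀¹ h^{-1} K((u − t)/h) λ(u) du − κ₀(t;h) λ(t) | ≤ L h. -/
open MeasureTheory

/-- Boundary-adjusted kernel approximation: for a kernel `K` supported in `[-1,1]` with unit
mass and a differentiable `λ` with `|λ'| ≤ L`, for all `t ∈ [0,1]` and `0 < h ≤ 1`: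
`|∫₀¹ h⁻¹ K((u-t)/h) λ(u) du - κ₀(t;h) λ(t)| ≤ L h`, where
`κ₀(t;h) = ∫_{max(-1,-t/h)}^{min(1,(1-t)/h)} K(w) dw`. -/
theorem stmt_15 (K : ℝ → ℝ) (hKmeas : Measurable K) (hKnonneg : ∀ w, 0 ≤ K w)
    (hKsupp : Function.support K ⊆ Set.Icc (-1:ℝ) 1)
    (hKint : (∫ w in (-1:ℝ)..1, K w) = 1)
    (lam lam' : ℝ → ℝ)
    (hderiv : ∀ t ∈ Set.Icc (0:ℝ) 1, HasDerivWithinAt lam (lam' t) (Set.Icc (0:ℝ) 1) t)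
    (L : ℝ) (hL : ∀ t ∈ Set.Icc (0:ℝ) 1, |lam' t| ≤ L)
    (h : ℝ) (hh0 : 0 < h) (hh1 : h ≤ 1)
    (κ₀ : ℝ → ℝ)
    (hκ₀ : ∀ t, κ₀ t = ∫ w in max (-1) (-t/h)..min 1 ((1-t)/h), K w) :
    ∀ t ∈ Set.Icc (0:ℝ) 1,
      |(∫ u in (0:ℝ)..1, h⁻¹ * K ((u - t) / h) * lam u) - κ₀ t * lam t| ≤ L * h := by
  intro t ht
  obtain ⟨ht0, ht1⟩ := ht
  have hne : h ≠ 0 := ne_of_gt hh0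
  set a : ℝ := -t/h with ha
  set b : ℝ := (1-t)/h with hb
  set a' : ℝ := max (-1) (-t/h) with ha'
  set b' : ℝ := min 1 ((1-t)/h) with hb'
  have hL0 : 0 ≤ L := le_trans (abs_nonneg _) (hL 0 (by norm_num))
  have haa' : a ≤ a' := le_max_right _ _
  have hb'b : b' ≤ b := min_le_right _ _
  have ha'0 : a' ≤ 0 := max_le (by norm_num) (by rw [neg_div]; exact neg_nonpos.2 (by positivity))
  have h0b' : (0:ℝ) ≤ b' := le_min (by norm_num) (div_nonneg (by linarith) hh0.le)
  have ha'b' : a' ≤ b' := ha'0.trans h0b'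
  have hab : a ≤ b := haa'.trans (ha'b'.trans hb'b)
  have hm1a' : (-1:ℝ) ≤ a' := le_max_left _ _
  have hb'1 : b' ≤ 1 := min_le_left _ _
  -- K is integrable on (-1,1]
  have hKI : IntegrableOn K (Set.Ioc (-1:ℝ) 1) := by
    by_contra hc
    rw [intervalIntegral.integral_of_le (by norm_num : (-1:ℝ) ≤ 1),
      MeasureTheory.integral_undef hc] at hKint
    norm_num at hKint
  have hKm11 : IntervalIntegrable K volume (-1) 1 := by
    rw [intervalIntegrable_iff_integrableOn_Ioc_of_le (by norm_num : (-1:ℝ) ≤ 1)]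
    exact hKI
  have hKI' : IntervalIntegrable K volume a' b' := by
    rw [intervalIntegrable_iff_integrableOn_Ioc_of_le ha'b']
    exact hKI.mono_set (Set.Ioc_subset_Ioc hm1a' hb'1)
  -- t + h * w ∈ [0,1] for w ∈ [a', b']
  have hmem : ∀ w ∈ Set.Icc a' b', t + h * w ∈ Set.Icc (0:ℝ) 1 := by
    intro w hw
    constructor
    · have h1 : a ≤ w := haa'.trans hw.1
      rw [ha, div_le_iff₀ hh0] at h1
      nlinarith
    · have h1 : w ≤ b := hw.2.trans hb'b
      rw [hb, le_div_iff₀ hh0] at h1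
      nlinarith
  -- continuity of lam on [0,1]
  have hlamc : ContinuousOn lam (Set.Icc (0:ℝ) 1) := fun x hx =>
    (hderiv x hx).continuousWithinAt
  -- the difference function and its bound
  set Δ : ℝ → ℝ := fun w => lam (t + h * w) - lam t with hΔ
  have hΔbound : ∀ w ∈ Set.Icc a' b', |Δ w| ≤ L * h := by
    intro w hw
    have h1 := hmem w hw
    have h2 : t ∈ Set.Icc (0:ℝ) 1 := ⟨ht0, ht1⟩
    have key := (convex_Icc (0:ℝ) 1).norm_image_sub_le_of_norm_hasDerivWithin_le
      (fun x hx => hderiv x hx)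
      (fun x hx => by rw [Real.norm_eq_abs]; exact hL x hx) h2 h1
    rw [Real.norm_eq_abs, Real.norm_eq_abs] at key
    calc |Δ w| ≤ L * |t + h * w - t| := key
      _ = L * (h * |w|) := by rw [add_sub_cancel_left, abs_mul, abs_of_pos hh0]
      _ ≤ L * (h * 1) := by
          have hw1 : |w| ≤ 1 := abs_le.2 ⟨hm1a'.trans hw.1, hw.2.trans hb'1⟩
          gcongr
      _ = L * h := by ring
  -- measurability of Δ on [a',b']
  have hΔc : ContinuousOn Δ (Set.Icc a' b') := by
    apply ContinuousOn.sub _ continuousOn_const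
    exact hlamc.comp (by fun_prop) hmem
  -- integrability of K * Δ
  have hFI : IntervalIntegrable (fun w => K w * Δ w) volume a' b' := by
    rw [intervalIntegrable_iff_integrableOn_Ioc_of_le ha'b']
    apply Integrable.mono' (g := fun w => K w * (L * h))
    · exact (hKI.mono_set (Set.Ioc_subset_Ioc hm1a' hb'1)).mul_const _
    · exact (hKmeas.aestronglyMeasurable.restrict).mul
        ((hΔc.mono Set.Ioc_subset_Icc_self).aestronglyMeasurable measurableSet_Ioc)
    · filter_upwards [ae_restrict_mem measurableSet_Ioc] with w hw
      rw [Real.norm_eq_abs, abs_mul, abs_of_nonneg (hKnonneg w)]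
      exact mul_le_mul_of_nonneg_left (hΔbound w (Set.Ioc_subset_Icc_self hw)) (hKnonneg w)
  set f : ℝ → ℝ := fun w => K w * lam (t + h * w) with hf
  have hfI : IntervalIntegrable f volume a' b' := by
    have h2 := hFI.add (hKI'.mul_const (lam t))
    have he : f = fun w => K w * Δ w + K w * lam t := by
      ext w; simp only [hf, hΔ]; ring
    rw [he]; exact h2
  -- change of variables
  have hcv : (∫ u in (0:ℝ)..1, h⁻¹ * K ((u - t) / h) * lam u) = ∫ w in a..b, f w := by
    have key := intervalIntegral.integral_comp_mul_add (a := a) (b := b)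
      (f := fun u => K ((u - t)/h) * lam u) hne t
    have e1 : h * a + t = 0 := by rw [ha]; field_simp; try ring
    have e2 : h * b + t = 1 := by rw [hb]; field_simp; try ring
    rw [e1, e2] at key
    have hred : (∫ u in (0:ℝ)..1, h⁻¹ * K ((u - t) / h) * lam u)
        = h⁻¹ • ∫ u in (0:ℝ)..1, K ((u - t) / h) * lam u := by
      rw [smul_eq_mul, ← intervalIntegral.integral_const_mul]
      congr 1; ext u; ring
    rw [hred, ← key]
    apply intervalIntegral.integral_congr
    intro x _
    have e3 : (h * x + t - t) / h = x := by field_simp; ring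
    simp only [hf, e3, add_comm t (h * x)]
  -- shrink the integration interval
  have hae : ∀ᵐ x : ℝ, x ≠ (-1:ℝ) := by
    rw [ae_iff]
    have he : {x : ℝ | ¬ x ≠ -1} = {(-1:ℝ)} := by ext x; simp
    rw [he]; exact measure_singleton _
  have hshrink : (∫ w in a..b, f w) = ∫ w in a'..b', f w := by
    rw [intervalIntegral.integral_of_le hab, intervalIntegral.integral_of_le ha'b']
    have step1 : (∫ w in Set.Ioc a b, f w) = ∫ w in Set.Ioc a b, (Set.Ioc a' b').indicator f w := by
      apply setIntegral_congr_ae measurableSet_Ioc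
      filter_upwards [hae] with w hw hwab
      by_cases hmem' : w ∈ Set.Ioc a' b'
      · rw [Set.indicator_of_mem hmem']
      · rw [Set.indicator_of_notMem hmem']
        have hK0 : K w = 0 := by
          by_contra hK
          have hsupp := hKsupp (Function.mem_support.2 hK)
          apply hmem'
          constructor
          · exact max_lt (lt_of_le_of_ne hsupp.1 (Ne.symm hw)) hwab.1
          · exact le_min hsupp.2 (hwab.2)
        simp [hf, hK0]
    rw [step1, setIntegral_indicator measurableSet_Ioc,
      Set.inter_eq_self_of_subset_right (Set.Ioc_subset_Ioc haa' hb'b)]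
  -- rewrite the difference as a single integral
  have hdiff : (∫ u in (0:ℝ)..1, h⁻¹ * K ((u - t) / h) * lam u) - κ₀ t * lam t
      = ∫ w in a'..b', K w * Δ w := by
    rw [hcv, hshrink, hκ₀ t, ← ha', ← hb', ← intervalIntegral.integral_mul_const,
      ← intervalIntegral.integral_sub hfI (hKI'.mul_const _)]
    congr 1; ext w; simp only [hf, hΔ]; ring
  rw [hdiff]
  -- final estimate
  calc |∫ w in a'..b', K w * Δ w| ≤ ∫ w in a'..b', |K w * Δ w| :=
        intervalIntegral.abs_integral_le_integral_abs ha'b'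
    _ ≤ ∫ w in a'..b', K w * (L * h) := by
        apply intervalIntegral.integral_mono_on ha'b' hFI.abs (hKI'.mul_const _)
        intro x hx
        rw [abs_mul, abs_of_nonneg (hKnonneg x)]
        exact mul_le_mul_of_nonneg_left (hΔbound x hx) (hKnonneg x)
    _ = (∫ w in a'..b', K w) * (L * h) := intervalIntegral.integral_mul_const _ _
    _ ≤ (∫ w in (-1:ℝ)..1, K w) * (L * h) := by
        apply mul_le_mul_of_nonneg_right _ (by positivity)
        exact intervalIntegral.integral_mono_interval hm1a' ha'b' hb'1
          (Filter.Eventually.of_forall fun w => hKnonneg w) hKm11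
    _ = L * h := by rw [hKint, one_mul]
end

section
/- Let K : ℝ → [0,∞) be a measurable kernel supported in [−1,1] with ∫_{−1}^1 K(w) dw = 1 and K(−w) = K(w) for all w. Let f : [0,1] → ℝ be twice differentiable with |f′| ≤ F₁ and |f″| ≤ F₂, and let λ : [0,1] → ℝ be differentiable with |λ| ≤ Λ and |λ′| ≤ L. Then for 0 < h ≤ 1/2: (i) for every t ∈ [0,1], | ∫₀¹ h^{-1} K((u−t)/h) (f(u) − f(t)) λ(u) du | ≤ F₁ Λ h ∫_{−1}^1 |w| K(w) dw; (ii) for every t ∈ [h, 1−h], | ∫₀¹ h^{-1} K((u−t)/h) (f(u) − f(t)) λ(u) du | ≤ ( (1/2) F₂ Λ + F₁ L ) h² ∫_{−1}^1 w² K(w) dw. -/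
open MeasureTheory Set

private lemma lip_aux {g g' : ℝ → ℝ}
    (hg : ∀ x ∈ Icc (0:ℝ) 1, HasDerivWithinAt g (g' x) (Icc (0:ℝ) 1) x)
    {C : ℝ} (hC : ∀ x ∈ Icc (0:ℝ) 1, |g' x| ≤ C)
    {x y : ℝ} (hx : x ∈ Icc (0:ℝ) 1) (hy : y ∈ Icc (0:ℝ) 1) :
    |g y - g x| ≤ C * |y - x| := by
  have := Convex.norm_image_sub_le_of_norm_hasDerivWithin_le hg
    (fun z hz => by simpa [Real.norm_eq_abs] using hC z hz) (convex_Icc 0 1) hx hy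
  simpa [Real.norm_eq_abs] using this

private lemma ftc_le {g g' : ℝ → ℝ}
    (hg : ∀ x ∈ Icc (0:ℝ) 1, HasDerivWithinAt g (g' x) (Icc (0:ℝ) 1) x)
    (hg'c : ContinuousOn g' (Icc (0:ℝ) 1))
    {a b : ℝ} (ha : a ∈ Icc (0:ℝ) 1) (hb : b ∈ Icc (0:ℝ) 1) (hab : a ≤ b) :
    ∫ s in a..b, g' s = g b - g a := by
  apply intervalIntegral.integral_eq_sub_of_hasDeriv_right_of_le hab
  · exact fun x hx => ((hg x ⟨le_trans ha.1 hx.1, le_trans hx.2 hb.2⟩).continuousWithinAt).mono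
      (Icc_subset_Icc ha.1 hb.2)
  · intro x hx
    have hx01 : x ∈ Ioo (0:ℝ) 1 := ⟨lt_of_le_of_lt ha.1 hx.1, lt_of_lt_of_le hx.2 hb.2⟩
    exact ((hg x (Ioo_subset_Icc_self hx01)).hasDerivAt
      (Icc_mem_nhds hx01.1 hx01.2)).hasDerivWithinAt
  · exact (hg'c.mono (Icc_subset_Icc ha.1 hb.2)).intervalIntegrable_of_Icc hab

private lemma ftc_aux {g g' : ℝ → ℝ}
    (hg : ∀ x ∈ Icc (0:ℝ) 1, HasDerivWithinAt g (g' x) (Icc (0:ℝ) 1) x)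
    (hg'c : ContinuousOn g' (Icc (0:ℝ) 1))
    {a b : ℝ} (ha : a ∈ Icc (0:ℝ) 1) (hb : b ∈ Icc (0:ℝ) 1) :
    ∫ s in a..b, g' s = g b - g a := by
  rcases le_total a b with hab | hab
  · exact ftc_le hg hg'c ha hb hab
  · have := ftc_le hg hg'c hb ha hab
    rw [intervalIntegral.integral_symm]
    rw [this]; ring

private lemma taylor_aux {g g' g'' : ℝ → ℝ}
    (hg : ∀ x ∈ Icc (0:ℝ) 1, HasDerivWithinAt g (g' x) (Icc (0:ℝ) 1) x)
    (hg' : ∀ x ∈ Icc (0:ℝ) 1, HasDerivWithinAt g' (g'' x) (Icc (0:ℝ) 1) x)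
    {C : ℝ} (hC : ∀ x ∈ Icc (0:ℝ) 1, |g'' x| ≤ C)
    {t u : ℝ} (ht : t ∈ Icc (0:ℝ) 1) (hu : u ∈ Icc (0:ℝ) 1) :
    |g u - g t - g' t * (u - t)| ≤ 1/2 * C * (u - t)^2 := by
  have hg'c : ContinuousOn g' (Icc (0:ℝ) 1) := fun x hx => (hg' x hx).continuousWithinAt
  have hsub : Set.uIcc t u ⊆ Set.Icc (0:ℝ) 1 := by
    rw [Set.uIcc]; exact Set.Icc_subset_Icc (le_inf ht.1 hu.1) (sup_le ht.2 hu.2)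
  have int1 : IntervalIntegrable g' volume t u :=
    (hg'c.mono hsub).intervalIntegrable
  have int2 : IntervalIntegrable (fun _ => g' t) volume t u := intervalIntegrable_const
  have h1 : ∫ s in t..u, g' s = g u - g t := ftc_aux hg hg'c ht hu
  have h2 : ∫ s in t..u, (g' s - g' t) = g u - g t - g' t * (u - t) := by
    rw [intervalIntegral.integral_sub int1 int2, h1, intervalIntegral.integral_const,
      smul_eq_mul]
    ring
  rw [← h2, ← Real.norm_eq_abs]
  have int3 : IntegrableOn (fun s => ‖g' s - g' t‖) (Set.uIoc t u) :=
    (((hg'c.mono hsub).sub continuousOn_const).norm.integrableOn_uIcc).mono_set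
      uIoc_subset_uIcc
  have int4 : IntegrableOn (fun s => C * |s - t|) (Set.uIoc t u) :=
    ((continuous_const.mul (continuous_abs.comp (continuous_id.sub continuous_const))).continuousOn.integrableOn_uIcc).mono_set
      uIoc_subset_uIcc
  calc ‖∫ s in t..u, (g' s - g' t)‖ ≤ ∫ s in Set.uIoc t u, ‖g' s - g' t‖ :=
        intervalIntegral.norm_integral_le_integral_norm_uIoc
    _ ≤ ∫ s in Set.uIoc t u, C * |s - t| := by
        apply setIntegral_mono_on int3 int4 measurableSet_uIoc
        intro s hs
        have hs' : s ∈ Icc (0:ℝ) 1 := hsub (uIoc_subset_uIcc hs)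
        simpa [Real.norm_eq_abs] using lip_aux hg' hC ht hs'
    _ = C * ∫ s in Set.uIoc t u, |s - t| := integral_const_mul C _
    _ = C * (|u - t| ^ 2 / 2) := by
        have := integral_pow_abs_sub_uIoc (a := t) (b := u) (n := 1)
        simp only [pow_one] at this
        rw [this]; norm_num
    _ = 1/2 * C * (u - t)^2 := by rw [sq_abs]; ring

/-- Kernel bias bounds: for a symmetric kernel `K` supported in `[-1,1]` with unit mass,
`f` twice differentiable with `|f'| ≤ F₁`, `|f''| ≤ F₂`, and `λ` differentiable with
`|λ| ≤ Λ`, `|λ'| ≤ L`, for `0 < h ≤ 1/2`: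
(i) for every `t ∈ [0,1]`,
  `|∫₀¹ h⁻¹ K((u-t)/h)(f(u)-f(t))λ(u) du| ≤ F₁ Λ h ∫_{-1}^1 |w| K(w) dw`;
(ii) for every `t ∈ [h, 1-h]`,
  `|∫₀¹ h⁻¹ K((u-t)/h)(f(u)-f(t))λ(u) du| ≤ ((1/2)F₂Λ + F₁L) h² ∫_{-1}^1 w² K(w) dw`. -/
theorem stmt_16 (K : ℝ → ℝ) (hKmeas : Measurable K) (hKnonneg : ∀ w, 0 ≤ K w)
    (hKsupp : Function.support K ⊆ Set.Icc (-1:ℝ) 1)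
    (hKint : (∫ w in (-1:ℝ)..1, K w) = 1)
    (hKsymm : ∀ w, K (-w) = K w)
    (f f' f'' : ℝ → ℝ)
    (hf' : ∀ t ∈ Set.Icc (0:ℝ) 1, HasDerivWithinAt f (f' t) (Set.Icc (0:ℝ) 1) t)
    (hf'' : ∀ t ∈ Set.Icc (0:ℝ) 1, HasDerivWithinAt f' (f'' t) (Set.Icc (0:ℝ) 1) t)
    (F₁ F₂ : ℝ)
    (hF₁ : ∀ t ∈ Set.Icc (0:ℝ) 1, |f' t| ≤ F₁)
    (hF₂ : ∀ t ∈ Set.Icc (0:ℝ) 1, |f'' t| ≤ F₂)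
    (lam lam' : ℝ → ℝ)
    (hlam' : ∀ t ∈ Set.Icc (0:ℝ) 1, HasDerivWithinAt lam (lam' t) (Set.Icc (0:ℝ) 1) t)
    (Λ L : ℝ)
    (hΛ : ∀ t ∈ Set.Icc (0:ℝ) 1, |lam t| ≤ Λ)
    (hL : ∀ t ∈ Set.Icc (0:ℝ) 1, |lam' t| ≤ L)
    (h : ℝ) (hh0 : 0 < h) (hh1 : h ≤ 1/2) :
    (∀ t ∈ Set.Icc (0:ℝ) 1,
      |∫ u in (0:ℝ)..1, h⁻¹ * K ((u - t) / h) * (f u - f t) * lam u|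
        ≤ F₁ * Λ * h * ∫ w in (-1:ℝ)..1, |w| * K w) ∧
    (∀ t ∈ Set.Icc h (1 - h),
      |∫ u in (0:ℝ)..1, h⁻¹ * K ((u - t) / h) * (f u - f t) * lam u|
        ≤ ((1/2) * F₂ * Λ + F₁ * L) * h ^ 2 * ∫ w in (-1:ℝ)..1, w ^ 2 * K w) := by
  have h01 : (0:ℝ) ≤ 1 := zero_le_one
  have h0mem : (0:ℝ) ∈ Icc (0:ℝ) 1 := by norm_num
  have hF₁0 : 0 ≤ F₁ := le_trans (abs_nonneg _) (hF₁ 0 h0mem)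
  have hF₂0 : 0 ≤ F₂ := le_trans (abs_nonneg _) (hF₂ 0 h0mem)
  have hΛ0 : 0 ≤ Λ := le_trans (abs_nonneg _) (hΛ 0 h0mem)
  have hL0 : 0 ≤ L := le_trans (abs_nonneg _) (hL 0 h0mem)
  -- K is integrable
  have hKii : IntervalIntegrable K volume (-1) 1 := by
    by_contra hc
    rw [intervalIntegral.integral_undef hc] at hKint
    norm_num at hKint
  have hKint' : Integrable K := by
    refine (integrableOn_iff_integrable_of_support_subset hKsupp).1 ?_
    exact (integrableOn_Icc_iff_integrableOn_Ioc (by simp)).2 hKii.1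
  have hKabs : ∀ w, K w ≠ 0 → |w| ≤ 1 := fun w hw =>
    abs_le.2 ⟨(hKsupp hw).1, (hKsupp hw).2⟩
  have habs_le : ∀ (q : ℝ → ℝ), (∀ w, K w ≠ 0 → |q w| ≤ 1) →
      ∀ w, ‖q w * K w‖ ≤ K w := by
    intro q hq w
    rcases eq_or_ne (K w) 0 with h0 | h0
    · simp [h0]
    · rw [Real.norm_eq_abs, abs_mul, abs_of_nonneg (hKnonneg w)]
      exact mul_le_of_le_one_left (hKnonneg w) (hq w h0)
  have hGabs : Integrable (fun w => |w| * K w) :=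
    hKint'.mono' ((measurable_abs.mul hKmeas).aestronglyMeasurable)
      (Filter.Eventually.of_forall (habs_le _ (fun w hw => by
        simpa [abs_abs] using hKabs w hw)))
  have hGw : Integrable (fun w => w * K w) :=
    hKint'.mono' ((measurable_id.mul hKmeas).aestronglyMeasurable)
      (Filter.Eventually.of_forall (habs_le _ (fun w hw => hKabs w hw)))
  have hGsq : Integrable (fun w => w ^ 2 * K w) :=
    hKint'.mono' (((measurable_id.pow_const 2).mul hKmeas).aestronglyMeasurable)
      (Filter.Eventually.of_forall (habs_le _ (fun w hw => by
        rw [abs_pow]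
        exact pow_le_one₀ (abs_nonneg _) (hKabs w hw))))
  -- change of variables
  have cov : ∀ (g : ℝ → ℝ) (t : ℝ), (∫ u : ℝ, g ((u - t) / h)) = h * ∫ w, g w := by
    intro g t
    have h1 : (∫ u : ℝ, g ((u - t) / h)) = ∫ u : ℝ, (fun x => g (x / h)) (u - t) := rfl
    rw [h1, integral_sub_right_eq_self (fun x => g (x / h)) t,
      Measure.integral_comp_div (fun x => g x) h, smul_eq_mul, abs_of_pos hh0]
  have hcomp : ∀ (g : ℝ → ℝ), Integrable g → ∀ t : ℝ,
      Integrable (fun u => g ((u - t) / h)) := by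
    intro g hg t
    exact (hg.comp_div hh0.ne').comp_sub_right t
  -- interval integral over [-1,1] equals integral over ℝ
  have hIto : ∀ (q : ℝ → ℝ), (∫ w in (-1:ℝ)..1, q w * K w) = ∫ w, q w * K w := by
    intro q
    rw [intervalIntegral.integral_of_le (by norm_num : (-1:ℝ) ≤ 1),
      ← integral_Icc_eq_integral_Ioc,
      setIntegral_eq_integral_of_forall_compl_eq_zero]
    intro w hw
    have hK0 : K w = 0 := by
      by_contra h0
      exact hw (hKsupp h0)
    simp [hK0]
  have hfc : ContinuousOn f (Icc (0:ℝ) 1) := fun x hx => (hf' x hx).continuousWithinAt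
  have hlamc : ContinuousOn lam (Icc (0:ℝ) 1) := fun x hx => (hlam' x hx).continuousWithinAt
  have hIint : ∀ t : ℝ, IntegrableOn
      (fun u => h⁻¹ * K ((u - t) / h) * (f u - f t) * lam u) (Icc (0:ℝ) 1) := by
    intro t
    have h1 : IntegrableOn (fun u => h⁻¹ * K ((u - t) / h)) (Icc (0:ℝ) 1) :=
      ((hcomp K hKint' t).const_mul h⁻¹).integrableOn
    have hcont : ContinuousOn (fun u => (f u - f t) * lam u) (Icc (0:ℝ) 1) :=
      (hfc.sub continuousOn_const).mul hlamc
    have h2 := h1.mul_continuousOn hcont isCompact_Icc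
    exact h2.congr_fun (fun u _ => by ring) measurableSet_Icc
  constructor
  · -- Part (i)
    intro t ht
    have hBint : Integrable (fun u => F₁ * Λ * (|(u - t) / h| * K ((u - t) / h))) :=
      (hcomp (fun w => |w| * K w) hGabs t).const_mul (F₁ * Λ)
    have key : ∀ u ∈ Ioc (0:ℝ) 1,
        ‖h⁻¹ * K ((u - t) / h) * (f u - f t) * lam u‖
          ≤ F₁ * Λ * (|(u - t) / h| * K ((u - t) / h)) := by
      intro u hu
      have hu' : u ∈ Icc (0:ℝ) 1 := Ioc_subset_Icc_self hu
      have h1 : |f u - f t| ≤ F₁ * |u - t| := lip_aux hf' hF₁ ht hu'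
      have h2 : |lam u| ≤ Λ := hΛ u hu'
      have hk : 0 ≤ K ((u - t) / h) := hKnonneg _
      have hinv : (0:ℝ) ≤ h⁻¹ := inv_nonneg.2 hh0.le
      have h3 : |f u - f t| * |lam u| ≤ F₁ * |u - t| * Λ :=
        mul_le_mul h1 h2 (abs_nonneg _) (by positivity)
      rw [Real.norm_eq_abs, abs_mul, abs_mul, abs_mul, abs_inv, abs_of_pos hh0,
        abs_of_nonneg hk, abs_div, abs_of_pos hh0]
      calc h⁻¹ * K ((u - t) / h) * |f u - f t| * |lam u|
          = (h⁻¹ * K ((u - t) / h)) * (|f u - f t| * |lam u|) := by ring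
        _ ≤ (h⁻¹ * K ((u - t) / h)) * (F₁ * |u - t| * Λ) :=
            mul_le_mul_of_nonneg_left h3 (mul_nonneg hinv hk)
        _ = F₁ * Λ * (|u - t| / h * K ((u - t) / h)) := by
            rw [div_eq_mul_inv]; ring
    rw [intervalIntegral.integral_of_le h01]
    have step1 : ‖∫ u in Ioc (0:ℝ) 1, h⁻¹ * K ((u - t) / h) * (f u - f t) * lam u‖
        ≤ ∫ u in Ioc (0:ℝ) 1, F₁ * Λ * (|(u - t) / h| * K ((u - t) / h)) := by
      apply norm_integral_le_of_norm_le hBint.restrict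
      exact (ae_restrict_iff' measurableSet_Ioc).2 (Filter.Eventually.of_forall key)
    have step2 : (∫ u in Ioc (0:ℝ) 1, F₁ * Λ * (|(u - t) / h| * K ((u - t) / h)))
        ≤ ∫ u : ℝ, F₁ * Λ * (|(u - t) / h| * K ((u - t) / h)) := by
      apply setIntegral_le_integral hBint
      exact Filter.Eventually.of_forall fun u =>
        mul_nonneg (mul_nonneg hF₁0 hΛ0) (mul_nonneg (abs_nonneg _) (hKnonneg _))
    have step3 : (∫ u : ℝ, F₁ * Λ * (|(u - t) / h| * K ((u - t) / h)))
        = F₁ * Λ * h * ∫ w in (-1:ℝ)..1, |w| * K w := by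
      rw [integral_const_mul, cov (fun w => |w| * K w) t, hIto (fun w => |w|)]
      ring
    rw [← Real.norm_eq_abs]
    calc ‖∫ u in Ioc (0:ℝ) 1, h⁻¹ * K ((u - t) / h) * (f u - f t) * lam u‖
        ≤ ∫ u in Ioc (0:ℝ) 1, F₁ * Λ * (|(u - t) / h| * K ((u - t) / h)) := step1
      _ ≤ ∫ u : ℝ, F₁ * Λ * (|(u - t) / h| * K ((u - t) / h)) := step2
      _ = F₁ * Λ * h * ∫ w in (-1:ℝ)..1, |w| * K w := step3
  · -- Part (ii)
    intro t ht
    have ht' : t ∈ Icc (0:ℝ) 1 := ⟨le_trans hh0.le ht.1, le_trans ht.2 (by linarith)⟩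
    set C : ℝ := (1/2) * F₂ * Λ + F₁ * L with hC
    have hsupp0 : ∀ u, u ∉ Icc (0:ℝ) 1 →
        h⁻¹ * K ((u - t) / h) * (f u - f t) * lam u = 0 := by
      intro u hu
      rcases eq_or_ne (K ((u - t) / h)) 0 with h0 | h0
      · rw [h0]; ring
      · exfalso
        have h1 := hKabs _ h0
        rw [abs_div, abs_of_pos hh0, div_le_one hh0] at h1
        have h2 := abs_le.1 h1
        exact hu ⟨by linarith [ht.1], by linarith [ht.2]⟩
    have hIint' : Integrable (fun u => h⁻¹ * K ((u - t) / h) * (f u - f t) * lam u) := by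
      refine (integrableOn_iff_integrable_of_support_subset ?_).1 (hIint t)
      intro u hu
      by_contra h'
      exact hu (hsupp0 u h')
    have hM : Integrable (fun u => f' t * lam t * ((u - t) / h * K ((u - t) / h))) :=
      (hcomp (fun w => w * K w) hGw t).const_mul (f' t * lam t)
    have hModd : (∫ w : ℝ, w * K w) = 0 := by
      have h2 : (∫ w : ℝ, (fun w => w * K w) (-w)) = ∫ w : ℝ, w * K w :=
        integral_neg_eq_self (fun w => w * K w) volume
      have h3 : (fun w : ℝ => (fun w => w * K w) (-w)) = fun w => -(w * K w) := by
        funext w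
        simp only [hKsymm w]
        ring
      rw [h3, integral_neg] at h2
      linarith
    have hM0 : (∫ u : ℝ, f' t * lam t * ((u - t) / h * K ((u - t) / h))) = 0 := by
      rw [integral_const_mul, cov (fun w => w * K w) t, hModd]
      ring
    have hB₂int : Integrable (fun u => C * h * (((u - t) / h) ^ 2 * K ((u - t) / h))) :=
      (hcomp (fun w => w ^ 2 * K w) hGsq t).const_mul (C * h)
    have key : ∀ u, ‖h⁻¹ * K ((u - t) / h) * (f u - f t) * lam u
          - f' t * lam t * ((u - t) / h * K ((u - t) / h))‖
        ≤ C * h * (((u - t) / h) ^ 2 * K ((u - t) / h)) := by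
      intro u
      rcases eq_or_ne (K ((u - t) / h)) 0 with h0 | h0
      · rw [h0]
        simp
      · have h1 := hKabs _ h0
        rw [abs_div, abs_of_pos hh0, div_le_one hh0] at h1
        have h2 := abs_le.1 h1
        have hu : u ∈ Icc (0:ℝ) 1 := ⟨by linarith [ht.1], by linarith [ht.2]⟩
        have hA : |f u - f t - f' t * (u - t)| ≤ 1/2 * F₂ * (u - t)^2 :=
          taylor_aux hf' hf'' hF₂ ht' hu
        have hD : |lam u - lam t| ≤ L * |u - t| := lip_aux hlam' hL ht' hu
        have hfp : |f' t| ≤ F₁ := hF₁ t ht'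
        have hlu : |lam u| ≤ Λ := hΛ u hu
        have hk : 0 ≤ K ((u - t) / h) := hKnonneg _
        have hinv : (0:ℝ) ≤ h⁻¹ := inv_nonneg.2 hh0.le
        have hIM : h⁻¹ * K ((u - t) / h) * (f u - f t) * lam u
            - f' t * lam t * ((u - t) / h * K ((u - t) / h))
            = h⁻¹ * K ((u - t) / h) *
              ((f u - f t - f' t * (u - t)) * lam u
                + f' t * (u - t) * (lam u - lam t)) := by
          field_simp
          ring
        have habs2 : |(f u - f t - f' t * (u - t)) * lam u
            + f' t * (u - t) * (lam u - lam t)| ≤ C * (u - t)^2 := by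
          have e1 : |(f u - f t - f' t * (u - t)) * lam u|
              ≤ (1/2 * F₂ * (u - t)^2) * Λ := by
            rw [abs_mul]
            exact mul_le_mul hA hlu (abs_nonneg _) (by positivity)
          have e2 : |f' t * (u - t) * (lam u - lam t)|
              ≤ F₁ * |u - t| * (L * |u - t|) := by
            rw [abs_mul, abs_mul]
            exact mul_le_mul (mul_le_mul hfp le_rfl (abs_nonneg _) hF₁0) hD
              (abs_nonneg _) (by positivity)
          have e3 : |u - t| * |u - t| = (u - t)^2 := by
            rw [abs_mul_abs_self]; ring
          calc |(f u - f t - f' t * (u - t)) * lam u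
              + f' t * (u - t) * (lam u - lam t)|
              ≤ |(f u - f t - f' t * (u - t)) * lam u|
                + |f' t * (u - t) * (lam u - lam t)| := abs_add_le _ _
            _ ≤ (1/2 * F₂ * (u - t)^2) * Λ + F₁ * |u - t| * (L * |u - t|) :=
                add_le_add e1 e2
            _ = C * (u - t)^2 := by rw [hC]; linear_combination F₁ * L * e3
        rw [hIM, Real.norm_eq_abs, abs_mul, abs_mul, abs_inv, abs_of_pos hh0,
          abs_of_nonneg hk]
        calc h⁻¹ * K ((u - t) / h) * |(f u - f t - f' t * (u - t)) * lam u
              + f' t * (u - t) * (lam u - lam t)|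
            ≤ h⁻¹ * K ((u - t) / h) * (C * (u - t)^2) :=
              mul_le_mul_of_nonneg_left habs2 (mul_nonneg hinv hk)
          _ = C * h * (((u - t) / h) ^ 2 * K ((u - t) / h)) := by
              field_simp
    rw [intervalIntegral.integral_of_le h01, ← integral_Icc_eq_integral_Ioc,
      setIntegral_eq_integral_of_forall_compl_eq_zero hsupp0]
    have hsplit : (∫ u : ℝ, h⁻¹ * K ((u - t) / h) * (f u - f t) * lam u)
        = ∫ u : ℝ, (h⁻¹ * K ((u - t) / h) * (f u - f t) * lam u
            - f' t * lam t * ((u - t) / h * K ((u - t) / h))) := by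
      rw [integral_sub hIint' hM, hM0, sub_zero]
    have hfin : (∫ u : ℝ, C * h * (((u - t) / h) ^ 2 * K ((u - t) / h)))
        = C * h ^ 2 * ∫ w in (-1:ℝ)..1, w ^ 2 * K w := by
      rw [integral_const_mul, cov (fun w => w ^ 2 * K w) t, hIto (fun w => w ^ 2)]
      ring
    rw [← Real.norm_eq_abs, hsplit]
    calc ‖∫ u : ℝ, (h⁻¹ * K ((u - t) / h) * (f u - f t) * lam u
            - f' t * lam t * ((u - t) / h * K ((u - t) / h)))‖
        ≤ ∫ u : ℝ, C * h * (((u - t) / h) ^ 2 * K ((u - t) / h)) :=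
          norm_integral_le_of_norm_le hB₂int (Filter.Eventually.of_forall key)
      _ = C * h ^ 2 * ∫ w in (-1:ℝ)..1, w ^ 2 * K w := hfin
end
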